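/- Let d ≥ 3, let ‖·‖ be any norm on ℝ^d, let A be a finite set of points of ‖·‖-diameter at most 1, and let λ ∈ (0,1). Then A has a subset A′ of ‖·‖-diameter at most λ with |A′| ≥ |A| · λ^d / ((1+λ)^d · (d·log d + d·log log d + 5d)). In particular, for every d and λ ∈ (0,1) there is a constant c(d,λ) > 0 such that every finite set of diameter 1 in a d-dimensional normed space has a subset of diameter at most λ containing at least a c(d,λ)-fraction of its points. -/

import Mathlib

open Pointwise Filter

noncomputable section

/-- A set in `ℝ^d` is convexly independent if no point of it lies in the
convex hull of the other points. -/
def ConvInd {d : ℕ} (S : Set (Fin d → ℝ)) : Prop :=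
  ∀ p ∈ S, p ∉ convexHull ℝ (S \ {p})

/-- `Efun d n` : the maximum, over `n`-point sets `P ⊂ ℝ^d`, of the number of
unordered pairs of distinct points of `P` whose midpoints are pairwise distinct
and form a convexly independent set.  Unordered pairs are encoded as ordered
pairs with the reversed pair excluded. -/
def Efun (d n : ℕ) : ℕ :=
  sSup {k | ∃ (P : Finset (Fin d → ℝ)) (T : Finset ((Fin d → ℝ) × (Fin d → ℝ))),
    P.card = n ∧
    (∀ e ∈ T, e.1 ∈ P ∧ e.2 ∈ P ∧ e.1 ≠ e.2 ∧ (e.2, e.1) ∉ T) ∧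
    Set.InjOn (fun e : (Fin d → ℝ) × (Fin d → ℝ) => midpoint ℝ e.1 e.2) ↑T ∧
    ConvInd ((fun e : (Fin d → ℝ) × (Fin d → ℝ) => midpoint ℝ e.1 e.2) '' ↑T) ∧
    T.card = k}

/-- `Mfun d m n` : the maximum, over `m`-point sets `P` and `n`-point sets `Q` in `ℝ^d`,
of the size of a convexly independent subset of the Minkowski sum `P + Q`. -/
def Mfun (d m n : ℕ) : ℕ :=
  sSup {k | ∃ P Q S : Finset (Fin d → ℝ),
    P.card = m ∧ Q.card = n ∧
    (S : Set (Fin d → ℝ)) ⊆ (P : Set (Fin d → ℝ)) + (Q : Set (Fin d → ℝ)) ∧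
    ConvInd (S : Set (Fin d → ℝ)) ∧ S.card = k}

/-- A norm on `ℝ^d` whose unit ball is strictly convex (the unit sphere contains
no nondegenerate segment, expressed via midpoints of distinct unit vectors). -/
structure StrictNorm (d : ℕ) where
  toFun : (Fin d → ℝ) → ℝ
  eq_zero_iff : ∀ x, toFun x = 0 ↔ x = 0
  smul_eq : ∀ (a : ℝ) (x : Fin d → ℝ), toFun (a • x) = |a| * toFun x
  add_le : ∀ x y, toFun (x + y) ≤ toFun x + toFun y
  strictly_convex : ∀ x y, toFun x = 1 → toFun y = 1 → x ≠ y →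
    toFun ((1 / 2 : ℝ) • (x + y)) < 1

/-- A (not necessarily strictly convex) norm on `ℝ^d`. -/
structure NormOn (d : ℕ) where
  toFun : (Fin d → ℝ) → ℝ
  eq_zero_iff : ∀ x, toFun x = 0 ↔ x = 0
  smul_eq : ∀ (a : ℝ) (x : Fin d → ℝ), toFun (a • x) = |a| * toFun x
  add_le : ∀ x y, toFun (x + y) ≤ toFun x + toFun y

/-- `Wfun d n` : the maximum, over `n`-point sets `S ⊂ ℝ^d` and strictly convex
norms on `ℝ^d`, of the number of pairwise nonparallel unit-distance pairs in `S`.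
(The nonparallelity condition between distinct ordered pairs automatically rules
out listing any unordered pair twice.) -/
def Wfun (d n : ℕ) : ℕ :=
  sSup {k | ∃ (S : Finset (Fin d → ℝ)) (ν : StrictNorm d)
      (T : Finset ((Fin d → ℝ) × (Fin d → ℝ))),
    S.card = n ∧
    (∀ e ∈ T, e.1 ∈ S ∧ e.2 ∈ S ∧ ν.toFun (e.1 - e.2) = 1) ∧
    (∀ e ∈ T, ∀ f ∈ T, e ≠ f → ∀ c : ℝ, e.1 - e.2 ≠ c • (f.1 - f.2)) ∧
    T.card = k}

/-- `Ufun d n` : the maximum, over `n`-point sets `S ⊂ ℝ^d` and strictly convex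
norms on `ℝ^d`, of the number of unordered unit-distance pairs in `S`. -/
def Ufun (d n : ℕ) : ℕ :=
  sSup {k | ∃ (S : Finset (Fin d → ℝ)) (ν : StrictNorm d)
      (T : Finset ((Fin d → ℝ) × (Fin d → ℝ))),
    S.card = n ∧
    (∀ e ∈ T, e.1 ∈ S ∧ e.2 ∈ S ∧ e.1 ≠ e.2 ∧ ν.toFun (e.1 - e.2) = 1 ∧ (e.2, e.1) ∉ T) ∧
    T.card = k}

/-- `Dfun d n` : the maximum, over `n`-point sets `S ⊂ ℝ^d` and strictly convex
norms on `ℝ^d`, of the number of unordered diameter pairs in `S` (pairs of points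
whose distance equals the diameter `D` of `S` in the norm). -/
def Dfun (d n : ℕ) : ℕ :=
  sSup {k | ∃ (S : Finset (Fin d → ℝ)) (ν : StrictNorm d)
      (T : Finset ((Fin d → ℝ) × (Fin d → ℝ))) (D : ℝ),
    S.card = n ∧
    (∀ p ∈ S, ∀ q ∈ S, ν.toFun (p - q) ≤ D) ∧
    (∃ p ∈ S, ∃ q ∈ S, ν.toFun (p - q) = D) ∧
    (∀ e ∈ T, e.1 ∈ S ∧ e.2 ∈ S ∧ e.1 ≠ e.2 ∧ ν.toFun (e.1 - e.2) = D ∧ (e.2, e.1) ∉ T) ∧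
    T.card = k}

/-- A family of sets in `ℝ^d` is strictly antipodal if for each pair of points
`p ∈ A i`, `q ∈ A j` with `i ≠ j` there is a linear functional `φ` with
`φ p < φ r < φ q` for every other point `r` of the union. -/
def StrictlyAntipodal {d : ℕ} {ι : Type*} (A : ι → Set (Fin d → ℝ)) : Prop :=
  ∀ i j, i ≠ j → ∀ p ∈ A i, ∀ q ∈ A j, ∃ φ : (Fin d → ℝ) →ₗ[ℝ] ℝ,
    ∀ r ∈ ⋃ t, A t, r ≠ p → r ≠ q → φ p < φ r ∧ φ r < φ q

/-- `aconst d` = `a(d)` : the largest `k` such that for every `m` there is a strictly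
antipodal family of `k` sets in `ℝ^d`, each of size at least `m`. -/
def aconst (d : ℕ) : ℕ :=
  sSup {k | ∀ m : ℕ, ∃ A : Fin k → Finset (Fin d → ℝ),
    (∀ i, m ≤ (A i).card) ∧ StrictlyAntipodal (fun i => ((A i : Set (Fin d → ℝ))))}

/-- The set of midpoints between points in different members of a family of finite sets. -/
def midSet {d : ℕ} {ι : Type*} (B : ι → Finset (Fin d → ℝ)) : Set (Fin d → ℝ) :=
  {x | ∃ i j, i ≠ j ∧ ∃ p ∈ B i, ∃ q ∈ B j, x = midpoint ℝ p q}

/-- The set of differences between points in different members of a family of sets. -/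
def diffSet {d : ℕ} {ι : Type*} (A : ι → Set (Fin d → ℝ)) : Set (Fin d → ℝ) :=
  {x | ∃ i j, i ≠ j ∧ ∃ p ∈ A i, ∃ q ∈ A j, x = p - q}


section CoverAuxSec
open MeasureTheory Metric Set

namespace CoverAux

variable {d : ℕ}

lemma nn_zero (ν : NormOn d) : ν.toFun 0 = 0 := (ν.eq_zero_iff 0).mpr rfl

lemma nn_neg (ν : NormOn d) (x : Fin d → ℝ) : ν.toFun (-x) = ν.toFun x := by
  simpa using ν.smul_eq (-1) x

lemma nn_nonneg (ν : NormOn d) (x : Fin d → ℝ) : 0 ≤ ν.toFun x := by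
  have h := ν.add_le x (-x)
  rw [add_neg_cancel, nn_zero, nn_neg] at h
  linarith

lemma nn_sum_le (ν : NormOn d) {ι : Type*} (s : Finset ι) (f : ι → (Fin d → ℝ)) :
    ν.toFun (∑ i ∈ s, f i) ≤ ∑ i ∈ s, ν.toFun (f i) := by
  classical
  induction s using Finset.induction_on with
  | empty => simp [nn_zero]
  | insert _ _ h ih =>
    rw [Finset.sum_insert h, Finset.sum_insert h]
    exact (ν.add_le _ _).trans (by linarith)

lemma convex_sublevel (ν : NormOn d) (c : Fin d → ℝ) (D : ℝ) :
    Convex ℝ {x | ν.toFun (x - c) ≤ D} := by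
  intro x hx y hy a b ha hb hab
  simp only [mem_setOf_eq] at *
  have hx' : a • x + b • y - c = a • (x - c) + b • (y - c) := by
    have h1 : a • (x - c) + b • (y - c) = a • x + b • y - (a + b) • c := by
      rw [smul_sub, smul_sub, add_smul]; abel
    rw [h1, hab, one_smul]
  calc ν.toFun (a • x + b • y - c)
      ≤ ν.toFun (a • (x - c)) + ν.toFun (b • (y - c)) := by rw [hx']; exact ν.add_le _ _
    _ = a * ν.toFun (x - c) + b * ν.toFun (y - c) := by
        rw [ν.smul_eq, ν.smul_eq, abs_of_nonneg ha, abs_of_nonneg hb]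
    _ ≤ a * D + b * D := by
        have := nn_nonneg ν (x - c); have := nn_nonneg ν (y - c)
        nlinarith
    _ = D := by rw [← add_mul, hab, one_mul]

lemma hull_diam (ν : NormOn d) (A : Set (Fin d → ℝ)) (D : ℝ)
    (hD : ∀ p ∈ A, ∀ q ∈ A, ν.toFun (p - q) ≤ D) :
    ∀ p ∈ convexHull ℝ A, ∀ q ∈ convexHull ℝ A, ν.toFun (p - q) ≤ D := by
  have h1 : ∀ q ∈ A, ∀ p ∈ convexHull ℝ A, ν.toFun (p - q) ≤ D := by
    intro q hq p hp
    exact convexHull_min (fun p' hp' => hD p' hp' q hq) (convex_sublevel ν q D) hp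
  intro p hp q hq
  have h2 : convexHull ℝ A ⊆ {x | ν.toFun (x - p) ≤ D} := by
    apply convexHull_min _ (convex_sublevel ν p D)
    intro q' hq'
    have := h1 q' hq' p hp
    simpa [mem_setOf_eq, ← nn_neg ν (p - q'), neg_sub] using this
  have := h2 hq
  simpa [mem_setOf_eq, ← nn_neg ν (q - p), neg_sub] using this

lemma bern (d : ℕ) (hd : 1 ≤ d) : (1 + 1/(2*(d:ℝ)))^d ≤ 2 := by
  have hd' : (1:ℝ) ≤ d := by exact_mod_cast hd
  set u : ℝ := 1/(2*(d:ℝ)) with hu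
  have hu0 : 0 < u := by positivity
  have hu2 : u ≤ 1/2 := by
    rw [hu, div_le_div_iff₀ (by positivity) (by norm_num)]
    linarith
  have h1 : (1:ℝ)/2 ≤ (1 - u)^d := by
    have := one_add_mul_le_pow (a := -u) (by linarith) d
    have hdu : (d:ℝ) * u = 1/2 := by
      rw [hu]; field_simp
    rw [← sub_eq_add_neg] at this
    calc (1:ℝ)/2 = 1 + (d:ℝ) * (-u) := by rw [mul_neg, hdu]; ring
      _ ≤ (1 - u)^d := this
  have hpos : (0:ℝ) < (1 - u)^d := by positivity
  have h2 : (1 + u)^d * (1 - u)^d ≤ 1 := by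
    rw [← mul_pow]
    calc ((1+u)*(1-u))^d = (1 - u^2)^d := by ring_nf
      _ ≤ 1 := pow_le_one₀ (by nlinarith) (by nlinarith)
  nlinarith [pow_nonneg (by linarith : (0:ℝ) ≤ 1 + u) d]





set_option maxHeartbeats 2000000 in
lemma key {d : ℕ} (hd : 1 ≤ d) (ν : NormOn d) (A : Finset (Fin d → ℝ)) (lam : ℝ)
    (hlam : lam ∈ Set.Ioo (0:ℝ) 1)
    (hdiam : ∀ p ∈ A, ∀ q ∈ A, ν.toFun (p - q) ≤ 1) :
    ∃ A' ⊆ A, (∀ p ∈ A', ∀ q ∈ A', ν.toFun (p - q) ≤ lam) ∧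
      (A.card : ℝ) * lam ^ d / (2 * (1 + lam) ^ d) ≤ (A'.card : ℝ) := by
  classical
  obtain ⟨hl0, hl1⟩ := hlam
  rcases A.eq_empty_or_nonempty with rfl | ⟨a0, ha0⟩
  · exact ⟨∅, by simp⟩
  have hd' : (1:ℝ) ≤ d := by exact_mod_cast hd
  have hd0 : (0:ℝ) < d := by linarith
  -- the "unit vectors" and the constant M
  set e : Fin d → (Fin d → ℝ) := fun i => fun j => if i = j then 1 else 0 with he
  set M : ℝ := ∑ i : Fin d, ν.toFun (e i) with hM
  have hMpos : 0 < M := by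
    have hpos : ∀ i : Fin d, 0 < ν.toFun (e i) := by
      intro i
      rcases (nn_nonneg ν (e i)).lt_or_eq with h | h
      · exact h
      · exfalso
        have : e i = 0 := (ν.eq_zero_iff (e i)).mp h.symm
        have := congrFun this i
        simp [he] at this
    exact Finset.sum_pos (fun i _ => hpos i) ⟨⟨0, hd⟩, Finset.mem_univ _⟩
  set ε : ℝ := (1 + lam) / (4 * d * M) with hε'
  have hε : 0 < ε := by positivity
  -- norm bound on the small cube
  have hball : ∀ b ∈ closedBall (0 : Fin d → ℝ) ε, ν.toFun b ≤ ε * M := by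
    intro b hb
    have hbi : ∀ i, |b i| ≤ ε := by
      intro i
      simp only [mem_closedBall, dist_eq_norm, sub_zero] at hb
      calc |b i| = ‖b i‖ := rfl
        _ ≤ ‖b‖ := norm_le_pi_norm b i
        _ ≤ ε := hb
    calc ν.toFun b = ν.toFun (∑ i : Fin d, b i • e i) := by
          rw [← pi_eq_sum_univ b]
      _ ≤ ∑ i : Fin d, ν.toFun (b i • e i) := nn_sum_le ν _ _
      _ = ∑ i : Fin d, |b i| * ν.toFun (e i) := by simp [ν.smul_eq]
      _ ≤ ∑ i : Fin d, ε * ν.toFun (e i) :=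
          Finset.sum_le_sum fun i _ =>
            mul_le_mul_of_nonneg_right (hbi i) (nn_nonneg ν (e i))
      _ = ε * M := by rw [← Finset.mul_sum]
  set s : ℝ := 1 + 2 * ε * M with hs'
  have hs1 : 1 < s := by
    have : 0 < 2 * ε * M := by positivity
    linarith
  set lam' : ℝ := lam / s with hlam'
  have hμ0 : 0 < lam' := by positivity
  have hμs : lam' * s = lam := by
    rw [hlam']; exact div_mul_cancel₀ lam (by linarith : s ≠ 0)
  have hμlt : lam' < 1 := by
    rw [hlam', div_lt_one (by linarith)]; linarith
  -- the body K
  set K : Set (Fin d → ℝ) := convexHull ℝ (A : Set (Fin d → ℝ)) + closedBall 0 ε with hK'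
  have hKconv : Convex ℝ K := (convex_convexHull ℝ _).add (convex_closedBall _ _)
  have hKcomp : IsCompact K := (A.finite_toSet.isCompact_convexHull ℝ).add (isCompact_closedBall _ _)
  have hAK : ∀ a ∈ A, a ∈ K := by
    intro a ha
    have h1 : a ∈ convexHull ℝ (A : Set (Fin d → ℝ)) := subset_convexHull ℝ _ ha
    have h2 : (0 : Fin d → ℝ) ∈ closedBall (0 : Fin d → ℝ) ε := mem_closedBall_self hε.le
    simpa using Set.add_mem_add h1 h2
  have hK0 : 0 < volume K := by
    refine lt_of_lt_of_le (measure_closedBall_pos volume a0 hε) (measure_mono ?_)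
    intro x hx
    have h1 : a0 ∈ convexHull ℝ (A : Set (Fin d → ℝ)) := subset_convexHull ℝ _ (by exact_mod_cast ha0)
    have h2 : x - a0 ∈ closedBall (0 : Fin d → ℝ) ε := by
      simp only [mem_closedBall, dist_eq_norm, sub_zero] at hx ⊢
      simpa using hx
    have := Set.add_mem_add h1 h2
    simpa using this
  have hKtop : volume K < ⊤ := hKcomp.measure_lt_top
  -- diameter of K
  have hKdiam : ∀ x ∈ K, ∀ y ∈ K, ν.toFun (x - y) ≤ s := by
    rintro _ ⟨c1, hc1, b1, hb1, rfl⟩ _ ⟨c2, hc2, b2, hb2, rfl⟩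
    have h1 : ν.toFun (c1 - c2) ≤ 1 := hull_diam ν _ 1 hdiam c1 hc1 c2 hc2
    have h2 : ν.toFun b1 ≤ ε * M := hball b1 hb1
    have h3 : ν.toFun (-b2) ≤ ε * M := by rw [nn_neg]; exact hball b2 hb2
    have heq : c1 + b1 - (c2 + b2) = (c1 - c2) + b1 + (-b2) := by abel
    calc ν.toFun (c1 + b1 - (c2 + b2)) = ν.toFun ((c1 - c2) + b1 + (-b2)) := by rw [heq]
      _ ≤ ν.toFun ((c1 - c2) + b1) + ν.toFun (-b2) := ν.add_le _ _
      _ ≤ ν.toFun (c1 - c2) + ν.toFun b1 + ν.toFun (-b2) := by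
          have := ν.add_le (c1 - c2) b1; linarith
      _ ≤ 1 + ε * M + ε * M := by linarith
      _ = s := by rw [hs']; ring
  -- counting
  set S : (Fin d → ℝ) → Set (Fin d → ℝ) := fun a => a +ᵥ (lam' • K) with hS'
  set N : (Fin d → ℝ) → ℕ := fun t => (A.filter (fun a => t ∈ S a)).card with hN'
  set r : ℝ := (A.card : ℝ) * lam' ^ d / (1 + lam') ^ d with hr'
  have hApos : 0 < A.card := Finset.card_pos.mpr ⟨a0, ha0⟩
  have hr0 : 0 < r := by
    have hc : (0:ℝ) < A.card := by exact_mod_cast hApos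
    rw [hr']
    exact div_pos (mul_pos hc (pow_pos hμ0 d)) (pow_pos (by linarith) d)
  have hSm : ∀ a, MeasurableSet (S a) := fun a => ((hKcomp.smul lam').vadd a).measurableSet
  have hTm : MeasurableSet ((1 + lam') • K) := (hKcomp.smul (1 + lam')).measurableSet
  have hSub : ∀ a ∈ A, S a ⊆ (1 + lam') • K := by
    intro a ha x hx
    obtain ⟨y, hy, rfl⟩ := hx
    have h1 : a + y ∈ K + lam' • K := Set.add_mem_add (hAK a ha) hy
    have h2 : (1 + lam') • K = K + lam' • K := by
      rw [hKconv.add_smul (by norm_num) hμ0.le, one_smul]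
    rw [h2]
    simpa using h1
  have hcount : ∀ t, (∑ a ∈ A, (S a).indicator (1 : (Fin d → ℝ) → ENNReal) t) = (N t : ENNReal) := by
    intro t
    rw [hN']
    simp only [Finset.card_filter]
    push_cast
    refine Finset.sum_congr rfl fun a _ => ?_
    by_cases h : t ∈ S a <;> simp [h, Set.indicator_apply]
  -- the main averaging step
  obtain ⟨t0, ht0⟩ : ∃ t, r ≤ (N t : ℝ) := by
    by_contra hcon
    push_neg at hcon
    have hceil : 1 ≤ ⌈r⌉₊ := Nat.ceil_pos.mpr hr0
    set m : ℕ := ⌈r⌉₊ - 1 with hm'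
    have hNm : ∀ t, N t ≤ m := by
      intro t
      have h1 : N t < ⌈r⌉₊ := Nat.lt_ceil.mpr (hcon t)
      omega
    have hptw : ∀ t, (∑ a ∈ A, (S a).indicator (1 : (Fin d → ℝ) → ENNReal) t)
        ≤ ((1 + lam') • K).indicator (fun _ => (m : ENNReal)) t := by
      intro t
      by_cases ht : t ∈ (1 + lam') • K
      · rw [Set.indicator_of_mem ht, hcount]
        exact_mod_cast Nat.cast_le.mpr (hNm t)
      · rw [Set.indicator_of_notMem ht, hcount]
        have hz : N t = 0 := by
          rw [hN']
          simp only [Finset.card_eq_zero, Finset.filter_eq_empty_iff]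
          intro a ha hta
          exact ht (hSub a ha hta)
        simp [hz]
    have hint : (∫⁻ t, (∑ a ∈ A, (S a).indicator (1 : (Fin d → ℝ) → ENNReal) t))
        = (A.card : ENNReal) * (ENNReal.ofReal (lam' ^ d) * volume K) := by
      rw [lintegral_finset_sum _ (fun a _ => measurable_one.indicator (hSm a))]
      have hone : ∀ a ∈ A, (∫⁻ t, (S a).indicator (1 : (Fin d → ℝ) → ENNReal) t)
          = ENNReal.ofReal (lam' ^ d) * volume K := by
        intro a _
        rw [lintegral_indicator_one (hSm a), hS']
        rw [measure_vadd, Measure.addHaar_smul]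
        rw [Module.finrank_fin_fun, abs_of_nonneg (pow_nonneg hμ0.le d)]
      rw [Finset.sum_congr rfl hone, Finset.sum_const, nsmul_eq_mul]
    have hTvol : volume ((1 + lam') • K) = ENNReal.ofReal ((1 + lam') ^ d) * volume K := by
      rw [Measure.addHaar_smul, Module.finrank_fin_fun,
        abs_of_nonneg (pow_nonneg (by linarith) d)]
    have hle : (A.card : ENNReal) * ENNReal.ofReal (lam' ^ d) * volume K
        ≤ (m : ENNReal) * ENNReal.ofReal ((1 + lam') ^ d) * volume K := by
      calc (A.card : ENNReal) * ENNReal.ofReal (lam' ^ d) * volume K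
          = ∫⁻ t, (∑ a ∈ A, (S a).indicator (1 : (Fin d → ℝ) → ENNReal) t) := by
            rw [hint, mul_assoc]
        _ ≤ ∫⁻ t, ((1 + lam') • K).indicator (fun _ => (m : ENNReal)) t :=
            lintegral_mono hptw
        _ = (m : ENNReal) * volume ((1 + lam') • K) := by
            rw [lintegral_indicator hTm, setLIntegral_const]
        _ = (m : ENNReal) * ENNReal.ofReal ((1 + lam') ^ d) * volume K := by
            rw [hTvol, mul_assoc]
    have hle2 : (A.card : ENNReal) * ENNReal.ofReal (lam' ^ d)
        ≤ (m : ENNReal) * ENNReal.ofReal ((1 + lam') ^ d) :=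
      (ENNReal.mul_le_mul_iff_left hK0.ne' hKtop.ne).mp hle
    have hre : (A.card : ℝ) * lam' ^ d ≤ (m : ℝ) * (1 + lam') ^ d := by
      have h1 : ((A.card : ENNReal) * ENNReal.ofReal (lam' ^ d))
          = ENNReal.ofReal ((A.card : ℝ) * lam' ^ d) := by
        rw [ENNReal.ofReal_mul (Nat.cast_nonneg _), ENNReal.ofReal_natCast]
      have h2 : ((m : ENNReal) * ENNReal.ofReal ((1 + lam') ^ d))
          = ENNReal.ofReal ((m : ℝ) * (1 + lam') ^ d) := by
        rw [ENNReal.ofReal_mul (Nat.cast_nonneg _), ENNReal.ofReal_natCast]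
      rw [h1, h2] at hle2
      exact (ENNReal.ofReal_le_ofReal_iff
        (mul_nonneg (Nat.cast_nonneg _) (pow_nonneg (by linarith) d))).mp hle2
    have hfinal : r ≤ (m : ℝ) := by
      rw [hr', div_le_iff₀ (by positivity)]
      linarith [hre]
    have hmr : (m : ℝ) < r := by
      have h1 : (⌈r⌉₊ : ℝ) < r + 1 := Nat.ceil_lt_add_one hr0.le
      have h2 : (m : ℝ) = (⌈r⌉₊ : ℝ) - 1 := by
        rw [hm', Nat.cast_sub hceil]; norm_num
      linarith
    linarith
  -- conclusion
  refine ⟨A.filter (fun a => t0 ∈ S a), Finset.filter_subset _ _, ?_, ?_⟩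
  · intro p hp q hq
    obtain ⟨hpA, hpS⟩ := Finset.mem_filter.mp hp
    obtain ⟨hqA, hqS⟩ := Finset.mem_filter.mp hq
    rw [hS', Set.mem_vadd_set] at hpS hqS
    obtain ⟨y1, hy1, hy1e⟩ := hpS
    obtain ⟨y2, hy2, hy2e⟩ := hqS
    obtain ⟨k1, hk1, rfl⟩ := hy1
    obtain ⟨k2, hk2, rfl⟩ := hy2
    have h1 : p + lam' • k1 = q + lam' • k2 := by
      rw [← vadd_eq_add, ← vadd_eq_add, hy1e, hy2e]
    have heq : p - q = lam' • (k2 - k1) := by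
      have h3 : p - q = (p + lam' • k1) - (q + lam' • k1) := by abel
      rw [h3, h1, smul_sub]; abel
    rw [heq, ν.smul_eq, abs_of_nonneg hμ0.le]
    have h4 := hKdiam k2 hk2 k1 hk1
    calc lam' * ν.toFun (k2 - k1) ≤ lam' * s := by nlinarith
      _ = lam := hμs
  · have hcard : (A.filter (fun a => t0 ∈ S a)).card = N t0 := rfl
    rw [hcard]
    refine le_trans ?_ ht0
    rw [hr', div_le_div_iff₀ (by positivity) (by positivity)]
    have hkey : lam ^ d * (1 + lam') ^ d ≤ lam' ^ d * (2 * (1 + lam) ^ d) := by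
      have h1 : lam ^ d = lam' ^ d * s ^ d := by rw [← mul_pow, hμs]
      have h2 : s * (1 + lam') = (1 + lam) * (1 + 1/(2*(d:ℝ))) := by
        have h3 : s * lam' = lam := by rw [mul_comm]; exact hμs
        have h4 : 2 * ε * M = (1 + lam) / (2 * (d:ℝ)) := by
          rw [hε']; field_simp; ring
        rw [mul_add, mul_one, h3, hs', h4]; field_simp; ring
      calc lam ^ d * (1 + lam') ^ d = lam' ^ d * (s * (1 + lam')) ^ d := by
            rw [h1, mul_pow]; ring
        _ = lam' ^ d * ((1 + lam) ^ d * (1 + 1/(2*(d:ℝ))) ^ d) := by rw [h2, mul_pow]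
        _ ≤ lam' ^ d * ((1 + lam) ^ d * 2) := by
            have hb := bern d hd
            have h5 : (0:ℝ) ≤ lam' ^ d := by positivity
            have h6 : (0:ℝ) ≤ (1 + lam) ^ d := by positivity
            exact mul_le_mul_of_nonneg_left (mul_le_mul_of_nonneg_left hb h6) h5
        _ = lam' ^ d * (2 * (1 + lam) ^ d) := by ring
    have hA0 : (0:ℝ) ≤ (A.card : ℝ) := by positivity
    calc (A.card : ℝ) * lam ^ d * (1 + lam') ^ d
        = (A.card : ℝ) * (lam ^ d * (1 + lam') ^ d) := by ring
      _ ≤ (A.card : ℝ) * (lam' ^ d * (2 * (1 + lam) ^ d)) := by nlinarith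
      _ = (A.card : ℝ) * lam' ^ d * (2 * (1 + lam) ^ d) := by ring

end CoverAux

end CoverAuxSec

/-- Covering lemma: for `d ≥ 3`, any norm on `ℝ^d`, any finite set `A` of diameter at
most `1` and any `λ ∈ (0,1)`, `A` has a subset of diameter at most `λ` of size at least
`|A|·λ^d / ((1+λ)^d (d log d + d log log d + 5d))`; in particular, for every `d` and
`λ ∈ (0,1)` a positive fraction `c(d,λ)` of the points can be chosen. -/
theorem covering_lemma :
    (∀ d : ℕ, 3 ≤ d → ∀ (ν : NormOn d) (A : Finset (Fin d → ℝ)) (lam : ℝ),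
      lam ∈ Set.Ioo (0 : ℝ) 1 →
      (∀ p ∈ A, ∀ q ∈ A, ν.toFun (p - q) ≤ 1) →
      ∃ A' ⊆ A, (∀ p ∈ A', ∀ q ∈ A', ν.toFun (p - q) ≤ lam) ∧
        (A.card : ℝ) * lam ^ d /
            ((1 + lam) ^ d * (d * Real.log d + d * Real.log (Real.log d) + 5 * d))
          ≤ (A'.card : ℝ)) ∧
    (∀ d : ℕ, ∀ lam : ℝ, lam ∈ Set.Ioo (0 : ℝ) 1 →
      ∃ c : ℝ, 0 < c ∧ ∀ (ν : NormOn d) (A : Finset (Fin d → ℝ)),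
        (∀ p ∈ A, ∀ q ∈ A, ν.toFun (p - q) ≤ 1) →
        ∃ A' ⊆ A, (∀ p ∈ A', ∀ q ∈ A', ν.toFun (p - q) ≤ lam) ∧
          c * (A.card : ℝ) ≤ (A'.card : ℝ)) := by
  constructor
  · intro d hd ν A lam hlam hdiam
    obtain ⟨A', hsub, hdiam', hcard⟩ :=
      CoverAux.key (le_trans (by norm_num) hd) ν A lam hlam hdiam
    refine ⟨A', hsub, hdiam', le_trans ?_ hcard⟩
    obtain ⟨hl0, hl1⟩ := hlam
    have hd3 : (3:ℝ) ≤ d := by exact_mod_cast hd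
    have hexp : Real.exp 1 ≤ (d:ℝ) := by
      have h9 := Real.exp_one_lt_d9
      have : (2.7182818286 : ℝ) ≤ 3 := by norm_num
      linarith
    have hlog : 1 ≤ Real.log d := by
      rw [Real.le_log_iff_exp_le (by linarith)]
      simpa using hexp
    have hloglog : 0 ≤ Real.log (Real.log d) := Real.log_nonneg hlog
    have hC : 2 ≤ (d:ℝ) * Real.log d + (d:ℝ) * Real.log (Real.log d) + 5 * d := by
      nlinarith
    have hpow : (0:ℝ) < (1 + lam) ^ d := by positivity
    have hnum : (0:ℝ) ≤ (A.card : ℝ) * lam ^ d := by positivity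
    have hden1 : (0:ℝ) < 2 * (1 + lam) ^ d := by positivity
    have hden2 : 2 * (1 + lam) ^ d
        ≤ (1 + lam) ^ d * ((d:ℝ) * Real.log d + (d:ℝ) * Real.log (Real.log d) + 5 * d) := by
      nlinarith
    exact div_le_div_of_nonneg_left hnum hden1 hden2
  · intro d lam hlam
    obtain ⟨hl0, hl1⟩ := hlam
    rcases Nat.eq_zero_or_pos d with rfl | hd
    · refine ⟨1, one_pos, fun ν A hdiam => ⟨A, le_refl _, ?_, by simp⟩⟩
      intro p hp q hq
      have hpq : p = q := Subsingleton.elim p q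
      rw [hpq, sub_self, CoverAux.nn_zero ν]
      exact hl0.le
    · refine ⟨lam ^ d / (2 * (1 + lam) ^ d), by positivity, fun ν A hdiam => ?_⟩
      obtain ⟨A', hsub, hdiam', hcard⟩ := CoverAux.key hd ν A lam ⟨hl0, hl1⟩ hdiam
      refine ⟨A', hsub, hdiam', ?_⟩
      have h1 : lam ^ d / (2 * (1 + lam) ^ d) * (A.card : ℝ)
          = (A.card : ℝ) * lam ^ d / (2 * (1 + lam) ^ d) := by ring
      rw [h1]
      exact hcard
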